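/- (Proposition 1: strong duality.) Let w ∈ ℝ^W and suppose there exists x ∈ ℝ^n with A_f x + B_f w + γ_f = 0 (so Slater's condition holds for FP'(w)). Then the optimal values of the primal and dual SOCPs coincide: fp'(w) = dp'(w), where fp'(w) is the infimum of 1ᵀz_s + 1ᵀz_q over FP'(w)-feasible points and dp'(w) is the supremum of D_w(μ, λ) over dual feasible points. -/

import Mathlib

open Matrix

/-- Euclidean norm on `Fin k → ℝ`. -/
noncomputable def eucNorm {k : ℕ} (y : Fin k → ℝ) : ℝ := Real.sqrt (∑ i, (y i) ^ 2)

/-- Euclidean inner product on `Fin k → ℝ`. -/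
def dotp {k : ℕ} (a b : Fin k → ℝ) : ℝ := ∑ i, a i * b i

/-- The constant data of the SOCP `FP'(w)` (and of its dual `DP'(w)`). -/
structure SOCPData (n m s N W : ℕ) where
  Af : Matrix (Fin m) (Fin n) ℝ
  Bf : Matrix (Fin m) (Fin W) ℝ
  As : Matrix (Fin s) (Fin n) ℝ
  gf : Fin m → ℝ
  gs : Fin s → ℝ
  Ay : Fin N → Matrix (Fin 3) (Fin n) ℝ
  bY : Fin N → Fin 3 → ℝ
  cq : Fin N → Fin n → ℝ
  gq : Fin N → ℝ

/-- Feasibility of `(x, y, z_s, z_q)` for the SOCP `FP'(w)`. -/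
def FPfeas {n m s N W : ℕ} (d : SOCPData n m s N W) (w : Fin W → ℝ) (x : Fin n → ℝ)
    (y : Fin N → Fin 3 → ℝ) (zs : Fin s → ℝ) (zq : Fin N → ℝ) : Prop :=
  (∀ i, 0 ≤ zs i) ∧ (∀ j, 0 ≤ zq j) ∧
  d.Af.mulVec x + d.Bf.mulVec w + d.gf = 0 ∧
  (∀ i, d.As.mulVec x i + d.gs i ≤ zs i) ∧
  (∀ j, y j = (d.Ay j).mulVec x + d.bY j) ∧
  (∀ j, eucNorm (y j) ≤ dotp (d.cq j) x + d.gq j + zq j)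

/-- Dual feasibility of `(μ_f, μ_y, λ_s, λ_q)` for `DP'(w)`. -/
def DualFeas {n m s N W : ℕ} (d : SOCPData n m s N W) (muf : Fin m → ℝ)
    (muy : Fin N → Fin 3 → ℝ) (ls : Fin s → ℝ) (lq : Fin N → ℝ) : Prop :=
  (∀ i, 0 ≤ ls i ∧ ls i ≤ 1) ∧ (∀ j, 0 ≤ lq j ∧ lq j ≤ 1) ∧
  (d.Af.transpose.mulVec muf + d.As.transpose.mulVec ls
    = (∑ j, (d.Ay j).transpose.mulVec (muy j)) + ∑ j, lq j • d.cq j) ∧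
  (∀ j, eucNorm (muy j) ≤ lq j)

/-- The dual objective `D_w(μ, λ)`. -/
def Dobj {n m s N W : ℕ} (d : SOCPData n m s N W) (w : Fin W → ℝ) (muf : Fin m → ℝ)
    (muy : Fin N → Fin 3 → ℝ) (ls : Fin s → ℝ) (lq : Fin N → ℝ) : ℝ :=
  dotp muf (d.Bf.mulVec w + d.gf) + dotp ls d.gs
    - (∑ j, dotp (muy j) (d.bY j)) - ∑ j, lq j * d.gq j

/-- `fp'(w)`: the optimal (infimum) value of the primal SOCP `FP'(w)`, in `EReal`. -/
noncomputable def fpVal {n m s N W : ℕ} (d : SOCPData n m s N W) (w : Fin W → ℝ) : EReal :=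
  sInf {v : EReal | ∃ x y zs zq, FPfeas d w x y zs zq ∧
    v = (((∑ i, zs i) + ∑ j, zq j : ℝ) : EReal)}

/-- `dp'(w)`: the optimal (supremum) value of the dual SOCP `DP'(w)`, in `EReal`. -/
noncomputable def dpVal {n m s N W : ℕ} (d : SOCPData n m s N W) (w : Fin W → ℝ) : EReal :=
  sSup {v : EReal | ∃ muf muy ls lq, DualFeas d muf muy ls lq ∧
    v = ((Dobj d w muf muy ls lq : ℝ) : EReal)}

section A
variable {k m n : ℕ}

def toEuc {k : ℕ} (y : Fin k → ℝ) : EuclideanSpace ℝ (Fin k) := WithLp.toLp 2 y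

lemma eucNorm_eq (y : Fin k → ℝ) : eucNorm y = ‖toEuc y‖ := by
  simp [eucNorm, toEuc, EuclideanSpace.norm_eq, Real.norm_eq_abs, sq_abs]

lemma dotp_eq_inner (a b : Fin k → ℝ) : dotp a b = inner ℝ (toEuc a) (toEuc b) := by
  simp [dotp, toEuc, PiLp.inner_apply, RCLike.inner_apply, conj_trivial]
  exact Finset.sum_congr rfl (fun i _ => mul_comm _ _)

lemma abs_dotp_le (a b : Fin k → ℝ) : |dotp a b| ≤ eucNorm a * eucNorm b := by
  rw [dotp_eq_inner, eucNorm_eq, eucNorm_eq]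
  exact abs_real_inner_le_norm _ _

lemma eucNorm_nonneg (y : Fin k → ℝ) : 0 ≤ eucNorm y := Real.sqrt_nonneg _

lemma eucNorm_zero : eucNorm (0 : Fin k → ℝ) = 0 := by simp [eucNorm]

lemma eucNorm_eq_zero {y : Fin k → ℝ} : eucNorm y = 0 ↔ y = 0 := by
  rw [eucNorm_eq]
  have h0 : ‖toEuc y‖ = 0 ↔ toEuc y = 0 := norm_eq_zero
  rw [h0]; constructor <;> intro h <;> simpa [toEuc] using h

lemma eucNorm_smul (c : ℝ) (y : Fin k → ℝ) : eucNorm (c • y) = |c| * eucNorm y := by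
  rw [eucNorm_eq, eucNorm_eq]
  have : toEuc (c • y) = c • toEuc y := rfl
  rw [this, norm_smul, Real.norm_eq_abs]

lemma eucNorm_add_le (a b : Fin k → ℝ) : eucNorm (a + b) ≤ eucNorm a + eucNorm b := by
  rw [eucNorm_eq, eucNorm_eq, eucNorm_eq]
  exact norm_add_le (toEuc a) (toEuc b)

lemma abs_apply_le_eucNorm (y : Fin k → ℝ) (i : Fin k) : |y i| ≤ eucNorm y := by
  rw [← Real.sqrt_sq_eq_abs]
  exact Real.sqrt_le_sqrt (Finset.single_le_sum (f := fun i => (y i)^2)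
    (fun i _ => sq_nonneg _) (Finset.mem_univ i))

lemma dotp_self (y : Fin k → ℝ) : dotp y y = eucNorm y * eucNorm y := by
  rw [eucNorm, Real.mul_self_sqrt (by positivity : (0:ℝ) ≤ ∑ i, (y i)^2)]
  simp [dotp, sq]

lemma dotp_comm (a b : Fin k → ℝ) : dotp a b = dotp b a := by
  simp [dotp, mul_comm]

lemma dotp_transpose (A : Matrix (Fin m) (Fin k) ℝ) (μ : Fin m → ℝ) (v : Fin k → ℝ) :
    dotp (Aᵀ.mulVec μ) v = dotp μ (A.mulVec v) := by
  show (Aᵀ.mulVec μ) ⬝ᵥ v = μ ⬝ᵥ (A.mulVec v)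
  rw [Matrix.mulVec_transpose, Matrix.dotProduct_mulVec]

lemma dotp_add_right (a b c : Fin k → ℝ) : dotp a (b + c) = dotp a b + dotp a c := by
  simp [dotp, mul_add, Finset.sum_add_distrib]

lemma dotp_add_left (a b c : Fin k → ℝ) : dotp (a + b) c = dotp a c + dotp b c := by
  simp [dotp, add_mul, Finset.sum_add_distrib]

lemma dotp_neg_right (a b : Fin k → ℝ) : dotp a (-b) = - dotp a b := by
  simp [dotp]

lemma dotp_smul_left (c : ℝ) (a b : Fin k → ℝ) : dotp (c • a) b = c * dotp a b := by
  simp [dotp, Finset.mul_sum, mul_assoc]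

lemma dotp_smul_right (c : ℝ) (a b : Fin k → ℝ) : dotp a (c • b) = c * dotp a b := by
  simp [dotp, Finset.mul_sum]; congr 1; ext i; ring

lemma dotp_zero_left (b : Fin k → ℝ) : dotp 0 b = 0 := by simp [dotp]
lemma dotp_zero_right (b : Fin k → ℝ) : dotp b 0 = 0 := by simp [dotp]

lemma dotp_single (i : Fin k) (b : Fin k → ℝ) : dotp (Pi.single i 1) b = b i := by
  simp [dotp, Pi.single_apply]

lemma dotp_sum_left {ι : Type*} (t : Finset ι) (f : ι → Fin k → ℝ) (b : Fin k → ℝ) :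
    dotp (∑ j ∈ t, f j) b = ∑ j ∈ t, dotp (f j) b := by
  simp [dotp, Finset.sum_mul]
  exact Finset.sum_comm

lemma continuous_eucNorm : Continuous (eucNorm : (Fin k → ℝ) → ℝ) := by
  apply Real.continuous_sqrt.comp
  exact continuous_finset_sum _ (fun i _ => (continuous_apply i).pow 2)

lemma continuous_dotp_right (c : Fin k → ℝ) : Continuous (fun v : Fin k → ℝ => dotp c v) := by
  apply continuous_finset_sum
  exact fun i _ => continuous_const.mul (continuous_apply i)

lemma continuous_dotp_left (c : Fin k → ℝ) : Continuous (fun v : Fin k → ℝ => dotp v c) := by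
  apply continuous_finset_sum
  exact fun i _ => (continuous_apply i).mul continuous_const

lemma continuous_mulVec (A : Matrix (Fin m) (Fin k) ℝ) :
    Continuous (fun v : Fin k → ℝ => A.mulVec v) :=
  A.mulVecLin.continuous_of_finiteDimensional

lemma dotp_neg_left (a b : Fin k → ℝ) : dotp (-a) b = - dotp a b := by
  simp [dotp]

lemma dotp_sub_left (a b c : Fin k → ℝ) : dotp (a - b) c = dotp a c - dotp b c := by
  simp [dotp, sub_mul, Finset.sum_sub_distrib]

lemma abs_dotp_le_of_bounded {a b : Fin k → ℝ} (h : ∀ i, |a i| ≤ 1) :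
    |dotp a b| ≤ ∑ i, |b i| := by
  calc |dotp a b| ≤ ∑ i, |a i * b i| := Finset.abs_sum_le_sum_abs _ _
    _ ≤ ∑ i, |b i| := by
        refine Finset.sum_le_sum (fun i _ => ?_)
        rw [abs_mul]
        exact mul_le_of_le_one_left (abs_nonneg _) (h i)

end A


section B
variable {k m n : ℕ}

lemma convexOn_affine (A : Matrix (Fin m) (Fin n) ℝ) (c : Fin m → ℝ) (i : Fin m) :
    ConvexOn ℝ Set.univ (fun x : Fin n → ℝ => A.mulVec x i + c i) := by
  refine ⟨convex_univ, fun x _ y _ a b ha hb hab => ?_⟩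
  apply le_of_eq
  have hc : a * c i + b * c i = c i := by rw [← add_mul, hab, one_mul]
  simp [Matrix.mulVec_add, Matrix.mulVec_smul]
  ring_nf
  linarith [hc]

lemma convexOn_eucNorm_affine (A : Matrix (Fin 3) (Fin n) ℝ) (c : Fin 3 → ℝ) :
    ConvexOn ℝ Set.univ (fun x : Fin n → ℝ => eucNorm (A.mulVec x + c)) := by
  refine ⟨convex_univ, fun x _ y _ a b ha hb hab => ?_⟩
  have h1 : A.mulVec (a • x + b • y) + c
      = a • (A.mulVec x + c) + b • (A.mulVec y + c) := by
    ext i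
    have hc : a * c i + b * c i = c i := by rw [← add_mul, hab, one_mul]
    simp [Matrix.mulVec_add, Matrix.mulVec_smul]
    ring_nf
    linarith [hc]
  show eucNorm (A.mulVec (a • x + b • y) + c)
      ≤ a • eucNorm (A.mulVec x + c) + b • eucNorm (A.mulVec y + c)
  rw [h1]
  calc eucNorm (a • (A.mulVec x + c) + b • (A.mulVec y + c))
      ≤ eucNorm (a • (A.mulVec x + c)) + eucNorm (b • (A.mulVec y + c)) := eucNorm_add_le _ _
    _ = a * eucNorm (A.mulVec x + c) + b * eucNorm (A.mulVec y + c) := by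
        rw [eucNorm_smul, eucNorm_smul, abs_of_nonneg ha, abs_of_nonneg hb]
    _ = a • eucNorm (A.mulVec x + c) + b • eucNorm (A.mulVec y + c) := rfl

lemma convexOn_neglin (c : Fin n → ℝ) (γ : ℝ) :
    ConvexOn ℝ Set.univ (fun x : Fin n → ℝ => -(dotp c x + γ)) := by
  refine ⟨convex_univ, fun x _ y _ a b ha hb hab => ?_⟩
  apply le_of_eq
  have hc : a * γ + b * γ = γ := by rw [← add_mul, hab, one_mul]
  simp [dotp_add_right, dotp_smul_right]
  ring_nf
  linarith [hc]

lemma convexOn_max_zero {f : (Fin n → ℝ) → ℝ} (hf : ConvexOn ℝ Set.univ f) :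
    ConvexOn ℝ Set.univ (fun x => max (f x) 0) :=
  hf.sup (convexOn_const 0 convex_univ)

lemma convexOn_finset_sum {ι : Type*} (t : Finset ι) (f : ι → (Fin n → ℝ) → ℝ)
    (h : ∀ i ∈ t, ConvexOn ℝ Set.univ (f i)) :
    ConvexOn ℝ Set.univ (fun x => ∑ i ∈ t, f i x) := by
  classical
  induction t using Finset.induction_on with
  | empty => simpa using convexOn_const (0:ℝ) convex_univ
  | insert a t2 hnotmem ih =>
    simp only [Finset.sum_insert hnotmem]
    exact (h a (Finset.mem_insert_self a t2)).add
      (ih (fun i hi => h i (Finset.mem_insert_of_mem hi)))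

end B


section C
variable {n m s N W : ℕ}

/-- The reduced primal objective after eliminating the slack variables. -/
noncomputable def Fobj (d : SOCPData n m s N W) (x : Fin n → ℝ) : ℝ :=
  (∑ i, max (d.As.mulVec x i + d.gs i) 0) +
  ∑ j, max (eucNorm ((d.Ay j).mulVec x + d.bY j) - (dotp (d.cq j) x + d.gq j)) 0

lemma Fobj_convexOn (d : SOCPData n m s N W) : ConvexOn ℝ Set.univ (Fobj d) := by
  have h1 : ConvexOn ℝ Set.univ
      (fun x : Fin n → ℝ => ∑ i, max (d.As.mulVec x i + d.gs i) 0) := by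
    exact convexOn_finset_sum _ _ (fun i _ => convexOn_max_zero (convexOn_affine d.As d.gs i))
  have h2 : ConvexOn ℝ Set.univ (fun x : Fin n → ℝ =>
      ∑ j, max (eucNorm ((d.Ay j).mulVec x + d.bY j) - (dotp (d.cq j) x + d.gq j)) 0) := by
    refine convexOn_finset_sum _ _ (fun j _ => convexOn_max_zero ?_)
    have := (convexOn_eucNorm_affine (d.Ay j) (d.bY j)).add (convexOn_neglin (d.cq j) (d.gq j))
    have he : (fun x : Fin n → ℝ => eucNorm ((d.Ay j).mulVec x + d.bY j)
        - (dotp (d.cq j) x + d.gq j)) = (fun x => eucNorm ((d.Ay j).mulVec x + d.bY j))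
        + (fun x => -(dotp (d.cq j) x + d.gq j)) := by
      funext x; simp only [Pi.add_apply]; ring
    rw [he]; exact this
  exact h1.add h2

lemma Fobj_continuous (d : SOCPData n m s N W) : Continuous (Fobj d) := by
  apply Continuous.add
  · apply continuous_finset_sum
    intro i _
    exact (((continuous_apply i).comp (continuous_mulVec d.As)).add continuous_const).max
      continuous_const
  · apply continuous_finset_sum
    intro j _
    refine Continuous.max ?_ continuous_const
    exact (continuous_eucNorm.comp ((continuous_mulVec (d.Ay j)).add continuous_const)).sub
      ((continuous_dotp_right (d.cq j)).add continuous_const)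

/-- From any `x` satisfying the affine constraints, build a feasible point whose
objective value is `Fobj d x`. -/
lemma exists_feas_of_affine (d : SOCPData n m s N W) (w : Fin W → ℝ) (x : Fin n → ℝ)
    (hx : d.Af.mulVec x + d.Bf.mulVec w + d.gf = 0) :
    ∃ y zs zq, FPfeas d w x y zs zq ∧ ((∑ i, zs i) + ∑ j, zq j) = Fobj d x := by
  refine ⟨fun j => (d.Ay j).mulVec x + d.bY j,
    fun i => max (d.As.mulVec x i + d.gs i) 0,
    fun j => max (eucNorm ((d.Ay j).mulVec x + d.bY j) - (dotp (d.cq j) x + d.gq j)) 0,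
    ⟨fun i => le_max_right _ _, fun j => le_max_right _ _, hx,
      fun i => le_max_left _ _, fun j => rfl, fun j => ?_⟩, rfl⟩
  have := le_max_left (eucNorm ((d.Ay j).mulVec x + d.bY j) - (dotp (d.cq j) x + d.gq j)) 0
  linarith

end C


section E
variable {n m s N W : ℕ}

lemma weak_duality (d : SOCPData n m s N W) (w : Fin W → ℝ) {x : Fin n → ℝ}
    {y : Fin N → Fin 3 → ℝ} {zs : Fin s → ℝ} {zq : Fin N → ℝ} {muf : Fin m → ℝ}
    {muy : Fin N → Fin 3 → ℝ} {ls : Fin s → ℝ} {lq : Fin N → ℝ}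
    (hP : FPfeas d w x y zs zq) (hD : DualFeas d muf muy ls lq) :
    Dobj d w muf muy ls lq ≤ (∑ i, zs i) + ∑ j, zq j := by
  obtain ⟨hzs, hzq, heq, hAs, hy, hq⟩ := hP
  obtain ⟨hls, hlq, hstat, hmu⟩ := hD
  have hg : d.Bf.mulVec w + d.gf = -(d.Af.mulVec x) := by
    rw [add_assoc] at heq
    exact eq_neg_of_add_eq_zero_right heq
  have h1 : dotp muf (d.Bf.mulVec w + d.gf) = - dotp muf (d.Af.mulVec x) := by
    rw [hg, dotp_neg_right]
  have h2 : dotp muf (d.Af.mulVec x)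
      = (∑ j, dotp (muy j) ((d.Ay j).mulVec x)) + (∑ j, lq j * dotp (d.cq j) x)
        - dotp ls (d.As.mulVec x) := by
    have h := congrArg (fun v => dotp v x) hstat
    simp only [dotp_add_left, dotp_sum_left, dotp_transpose, dotp_smul_left] at h
    linarith
  have key1 : dotp ls d.gs + dotp ls (d.As.mulVec x) ≤ ∑ i, zs i := by
    have : dotp ls (d.As.mulVec x) + dotp ls d.gs = ∑ i, ls i * (d.As.mulVec x i + d.gs i) := by
      simp [dotp, mul_add, Finset.sum_add_distrib]
    rw [add_comm, this]
    refine Finset.sum_le_sum (fun i _ => ?_)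
    calc ls i * (d.As.mulVec x i + d.gs i) ≤ ls i * zs i :=
          mul_le_mul_of_nonneg_left (hAs i) (hls i).1
      _ ≤ 1 * zs i := mul_le_mul_of_nonneg_right (hls i).2 (hzs i)
      _ = zs i := one_mul _
  have key2 : ∀ j, - dotp (muy j) (d.bY j) - dotp (muy j) ((d.Ay j).mulVec x)
      - lq j * dotp (d.cq j) x - lq j * d.gq j ≤ zq j := by
    intro j
    have hcs : - dotp (muy j) (y j) ≤ eucNorm (muy j) * eucNorm (y j) := by
      have := abs_dotp_le (muy j) (y j)
      have h' := neg_abs_le (dotp (muy j) (y j))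
      linarith
    have hc2 : eucNorm (muy j) * eucNorm (y j) ≤ lq j * eucNorm (y j) :=
      mul_le_mul_of_nonneg_right (hmu j) (eucNorm_nonneg _)
    have hc3 : lq j * eucNorm (y j) ≤ lq j * (dotp (d.cq j) x + d.gq j + zq j) :=
      mul_le_mul_of_nonneg_left (hq j) (hlq j).1
    have hc4 : lq j * zq j ≤ zq j := by
      calc lq j * zq j ≤ 1 * zq j := mul_le_mul_of_nonneg_right (hlq j).2 (hzq j)
        _ = zq j := one_mul _
    have hd : dotp (muy j) (y j) = dotp (muy j) ((d.Ay j).mulVec x) + dotp (muy j) (d.bY j) := by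
      rw [hy j, dotp_add_right]
    nlinarith [hcs, hc2, hc3, hc4]
  have key2s : ∑ j, (- dotp (muy j) (d.bY j) - dotp (muy j) ((d.Ay j).mulVec x)
      - lq j * dotp (d.cq j) x - lq j * d.gq j) ≤ ∑ j, zq j :=
    Finset.sum_le_sum (fun j _ => key2 j)
  have hsplit : ∑ j, (- dotp (muy j) (d.bY j) - dotp (muy j) ((d.Ay j).mulVec x)
      - lq j * dotp (d.cq j) x - lq j * d.gq j)
      = - (∑ j, dotp (muy j) (d.bY j)) - (∑ j, dotp (muy j) ((d.Ay j).mulVec x))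
      - (∑ j, lq j * dotp (d.cq j) x) - ∑ j, lq j * d.gq j := by
    simp [Finset.sum_sub_distrib, Finset.sum_add_distrib]
  rw [hsplit] at key2s
  rw [Dobj, h1, h2]
  linarith
end E


section G0
variable {m n : ℕ}

/-- If `c` vanishes on the kernel of `M`, then `c` is in the range of `Mᵀ`. -/
lemma exists_preimage_transpose (M : Matrix (Fin m) (Fin n) ℝ) (c : Fin n → ℝ)
    (hc : ∀ v, M.mulVec v = 0 → dotp c v = 0) : ∃ μ, Mᵀ.mulVec μ = c := by
  let L : EuclideanSpace ℝ (Fin m) →ₗ[ℝ] EuclideanSpace ℝ (Fin n) :=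
    { toFun := fun μ => WithLp.toLp 2 (Mᵀ.mulVec (WithLp.ofLp μ))
      map_add' := fun a b => by simp [Matrix.mulVec_add]
      map_smul' := fun t a => by simp [Matrix.mulVec_smul] }
  let S : Submodule ℝ (EuclideanSpace ℝ (Fin n)) := LinearMap.range L
  have hcS : (toEuc c) ∈ Sᗮᗮ := by
    intro u hu
    have hMu : M.mulVec (WithLp.ofLp u) = 0 := by
      funext i
      have := hu (L (WithLp.toLp 2 (Pi.single i 1))) ⟨WithLp.toLp 2 (Pi.single i 1), rfl⟩
      have h2 : dotp (Mᵀ.mulVec (Pi.single i 1)) (WithLp.ofLp u) = 0 :=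
        (dotp_eq_inner _ _).trans this
      rw [dotp_transpose, dotp_single] at h2
      exact h2
    have h3 : dotp (WithLp.ofLp u) c = 0 := by rw [dotp_comm]; exact hc _ hMu
    exact (dotp_eq_inner (WithLp.ofLp u) c).symm.trans h3
  rw [Submodule.orthogonal_orthogonal] at hcS
  obtain ⟨μ, hμ⟩ := hcS
  exact ⟨WithLp.ofLp μ, congrArg WithLp.ofLp hμ⟩

end G0


set_option maxHeartbeats 1000000

section G
variable {n m s N W : ℕ}

lemma exists_lagrange (d : SOCPData n m s N W) (g : Fin m → ℝ) (p : ℝ)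
    (x₀ : Fin n → ℝ) (hx₀ : d.Af.mulVec x₀ + g = 0)
    (hp : ∀ x, d.Af.mulVec x + g = 0 → p ≤ Fobj d x) :
    ∃ muf : Fin m → ℝ, ∀ x, p ≤ Fobj d x + dotp muf (d.Af.mulVec x + g) := by
  classical
  set T : (Fin n → ℝ) →ₗ[ℝ] (Fin m → ℝ) := d.Af.mulVecLin with hTdef
  have hTapp : ∀ v, T v = d.Af.mulVec v := fun v => Matrix.mulVecLin_apply _ _
  set V : Submodule ℝ (Fin m → ℝ) := LinearMap.range T with hVdef
  have hcoe : ∀ v, ((T.rangeRestrict v : Fin m → ℝ)) = d.Af.mulVec v := fun v => hTapp v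
  have hgmem : g ∈ V := ⟨-x₀, by
    rw [hTapp, Matrix.mulVec_neg]
    have : d.Af.mulVec x₀ = -g := by
      have := hx₀; rw [add_eq_zero_iff_eq_neg] at this; exact this
    rw [this, neg_neg]⟩
  set g₀ : V := ⟨g, hgmem⟩ with hg₀def
  set A : Set (V × ℝ) := {a | ∃ x, a.1 = T.rangeRestrict x + g₀ ∧ Fobj d x < a.2} with hAdef
  -- convexity of A
  have hconv : Convex ℝ A := by
    rintro ⟨u₁, r₁⟩ ⟨x₁, hu₁, hr₁⟩ ⟨u₂, r₂⟩ ⟨x₂, hu₂, hr₂⟩ θ σ hθ hσ hθσ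
    simp only at hu₁ hu₂ hr₁ hr₂
    refine ⟨θ • x₁ + σ • x₂, ?_, ?_⟩
    · show θ • u₁ + σ • u₂ = T.rangeRestrict (θ • x₁ + σ • x₂) + g₀
      have hgg : θ • g₀ + σ • g₀ = g₀ := by rw [← add_smul, hθσ, one_smul]
      rw [hu₁, hu₂, map_add, _root_.map_smul, _root_.map_smul, smul_add, smul_add,
        add_add_add_comm, hgg]
    · show Fobj d (θ • x₁ + σ • x₂) < θ • (u₁, r₁).2 + σ • (u₂, r₂).2
      have hF := (Fobj_convexOn d).2 (Set.mem_univ x₁) (Set.mem_univ x₂) hθ hσ hθσ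
      simp only [smul_eq_mul] at hF ⊢
      rcases eq_or_lt_of_le hθ with h0 | h0
      · have hσ1 : σ = 1 := by linarith
        rw [← h0, hσ1] at hF ⊢
        simp only [zero_mul, one_mul, zero_add] at hF ⊢
        exact lt_of_le_of_lt hF hr₂
      · have h1 : θ * Fobj d x₁ < θ * r₁ := by exact (mul_lt_mul_iff_right₀ h0).mpr hr₁
        have h2 : σ * Fobj d x₂ ≤ σ * r₂ := mul_le_mul_of_nonneg_left (le_of_lt hr₂) hσ
        linarith
  -- openness of A
  obtain ⟨R, hR⟩ := T.rangeRestrict.exists_rightInverse_of_surjective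
    (LinearMap.range_rangeRestrict T)
  have hRid : ∀ v : V, T.rangeRestrict (R v) = v := fun v => by
    have := LinearMap.ext_iff.mp hR v
    exact this
  have hopen : IsOpen A := by
    rw [isOpen_iff_forall_mem_open]
    rintro ⟨u₀, r₀⟩ ⟨x₀', hu₀, hr₀⟩
    simp only at hu₀ hr₀
    refine ⟨{b : V × ℝ | Fobj d (x₀' + R (b.1 - u₀)) < b.2}, ?_, ?_, ?_⟩
    · rintro ⟨u, r⟩ hb
      refine ⟨x₀' + R (u - u₀), ?_, hb⟩
      show u = T.rangeRestrict (x₀' + R (u - u₀)) + g₀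
      rw [map_add, hRid, hu₀]
      abel
    · apply isOpen_lt
      · exact (Fobj_continuous d).comp (continuous_const.add
          (R.continuous_of_finiteDimensional.comp (continuous_fst.sub continuous_const)))
      · exact continuous_snd
    · show Fobj d (x₀' + R ((u₀, r₀).1 - u₀)) < (u₀, r₀).2
      simp [hr₀]
  -- the point (0, p) is not in A
  have hq : ((0 : V), p) ∉ A := by
    rintro ⟨x, hu, hr⟩
    simp only at hu hr
    have hfeas : d.Af.mulVec x + g = 0 := by
      have : (((0:V) : Fin m → ℝ)) = ((T.rangeRestrict x + g₀ : V) : Fin m → ℝ) :=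
        congrArg _ hu
      simp only [Submodule.coe_add, hcoe, Submodule.coe_zero] at this
      rw [← this]
    exact absurd hr (not_lt.mpr (hp x hfeas))
  obtain ⟨f, hf⟩ := geometric_hahn_banach_open_point hconv hopen hq
  set t : ℝ := f (0, 1) with htdef
  have hsplit : ∀ (u : V) (r : ℝ), f (u, r) = f (u, 0) + r * t := by
    intro u r
    have h1 : (u, r) = (u, (0:ℝ)) + r • ((0:V), (1:ℝ)) := by
      simp [Prod.ext_iff]
    rw [h1, map_add, _root_.map_smul]
    simp [htdef, smul_eq_mul]
  have hT'x₀ : T.rangeRestrict x₀ = -g₀ := by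
    apply Subtype.ext
    show d.Af.mulVec x₀ = -g
    rw [add_eq_zero_iff_eq_neg] at hx₀
    exact hx₀
  have hzero_mem : ∀ r, Fobj d x₀ < r → (((0:V), r)) ∈ A := by
    intro r hr
    exact ⟨x₀, by rw [hT'x₀]; simp, hr⟩
  have hf00 : f ((0:V), (0:ℝ)) = 0 := by
    have h0 : ((0:V), (0:ℝ)) = (0 : ↥V × ℝ) := rfl
    rw [h0, map_zero]
  have hfq : f ((0:V), p) = p * t := by rw [hsplit, hf00, zero_add]
  have ht : t < 0 := by
    by_contra hcon
    push_neg at hcon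
    set r := max p (Fobj d x₀) + 1 with hrdef
    have h1 := hf _ (hzero_mem r (lt_of_le_of_lt (le_max_right _ _) (lt_add_one _)))
    rw [hsplit, hf00, zero_add, hfq] at h1
    have h2 : p ≤ r := le_trans (le_max_left _ _) (le_of_lt (lt_add_one _))
    nlinarith
  -- the key Lagrangian inequality
  have hkey : ∀ x, f (T.rangeRestrict x + g₀, 0) + t * Fobj d x ≤ t * p := by
    intro x
    by_contra hcon
    push_neg at hcon
    set φ := f (T.rangeRestrict x + g₀, 0) with hφdef
    have hFr : Fobj d x < (t * p - φ) / t := by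
      rw [lt_div_iff_of_neg ht]
      linarith
    have h1 := hf (T.rangeRestrict x + g₀, (t * p - φ) / t) ⟨x, rfl, hFr⟩
    rw [hsplit, hfq, div_mul_cancel₀ _ (ne_of_lt ht)] at h1
    linarith
  -- building the representing vector
  set Ξ : (Fin n → ℝ) →ₗ[ℝ] ℝ :=
    t⁻¹ • (((f : V × ℝ →ₗ[ℝ] ℝ).comp (LinearMap.inl ℝ V ℝ)).comp T.rangeRestrict) with hΞdef
  have hΞapp : ∀ v, Ξ v = t⁻¹ * f (T.rangeRestrict v, 0) := fun v => rfl
  set cvec : Fin n → ℝ := fun i => Ξ (fun j => if i = j then 1 else 0) with hcvecdef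
  have hΞeq : ∀ v, Ξ v = dotp cvec v := by
    intro v
    rw [LinearMap.pi_apply_eq_sum_univ Ξ v, dotp]
    refine Finset.sum_congr rfl (fun i _ => ?_)
    rw [smul_eq_mul, mul_comm]
  have hker : ∀ v, d.Af.mulVec v = 0 → dotp cvec v = 0 := by
    intro v hv
    rw [← hΞeq]
    have hT0 : T.rangeRestrict v = 0 := Subtype.ext (by rw [hcoe, hv]; rfl)
    rw [hΞapp, hT0]
    simp [hf00]
  obtain ⟨muf, hmuf⟩ := exists_preimage_transpose d.Af cvec hker
  refine ⟨muf, fun x => ?_⟩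
  have e1 : ∀ v, dotp muf (d.Af.mulVec v) = Ξ v := by
    intro v
    rw [← dotp_transpose, hmuf, hΞeq]
  have hgAf : g = d.Af.mulVec (-x₀) := by
    rw [Matrix.mulVec_neg]
    rw [add_eq_zero_iff_eq_neg] at hx₀
    rw [hx₀, neg_neg]
  have hdot : dotp muf (d.Af.mulVec x + g) = t⁻¹ * f (T.rangeRestrict x + g₀, 0) := by
    rw [dotp_add_right, e1 x]
    rw [hgAf, e1 (-x₀)]
    rw [← map_add Ξ, hΞapp, map_add, map_neg, hT'x₀, neg_neg]
  rw [hdot]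
  have h5 : t * (Fobj d x + t⁻¹ * f (T.rangeRestrict x + g₀, 0)) ≤ t * p := by
    have hinv : t * t⁻¹ = 1 := mul_inv_cancel₀ (ne_of_lt ht)
    have hexp : t * (Fobj d x + t⁻¹ * f (T.rangeRestrict x + g₀, 0))
        = t * Fobj d x + f (T.rangeRestrict x + g₀, 0) := by
      rw [mul_add, ← mul_assoc, hinv, one_mul]
    have := hkey x
    linarith [hexp]
  exact ((mul_le_mul_left_of_neg ht).mp h5)

end G


section H
variable {n m s N W : ℕ}

/-- The linear part of the dual-data map. -/
noncomputable def lamMap (d : SOCPData n m s N W) :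
    ((Fin s → ℝ) × (Fin N → ℝ) × (Fin N → Fin 3 → ℝ)) →ₗ[ℝ] (Fin n → ℝ) × ℝ where
  toFun e := (d.As.transpose.mulVec e.1 - (∑ j, (d.Ay j).transpose.mulVec (e.2.2 j))
      - ∑ j, e.2.1 j • d.cq j,
    dotp e.1 d.gs - (∑ j, dotp (e.2.2 j) (d.bY j)) - ∑ j, e.2.1 j * d.gq j)
  map_add' a b := by
    refine Prod.ext ?_ ?_
    · show d.As.transpose.mulVec (a.1 + b.1) - (∑ j, (d.Ay j).transpose.mulVec (a.2.2 j + b.2.2 j))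
        - ∑ j, (a.2.1 j + b.2.1 j) • d.cq j = _
      simp only [Matrix.mulVec_add, add_smul, Finset.sum_add_distrib]
      show _ = (d.As.transpose.mulVec a.1 - (∑ j, (d.Ay j).transpose.mulVec (a.2.2 j))
          - ∑ j, a.2.1 j • d.cq j) + (d.As.transpose.mulVec b.1
          - (∑ j, (d.Ay j).transpose.mulVec (b.2.2 j)) - ∑ j, b.2.1 j • d.cq j)
      abel
    · show dotp (a.1 + b.1) d.gs - (∑ j, dotp (a.2.2 j + b.2.2 j) (d.bY j))
        - ∑ j, (a.2.1 j + b.2.1 j) * d.gq j = _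
      simp only [dotp_add_left, add_mul, Finset.sum_add_distrib]
      show _ = (dotp a.1 d.gs - (∑ j, dotp (a.2.2 j) (d.bY j)) - ∑ j, a.2.1 j * d.gq j)
        + (dotp b.1 d.gs - (∑ j, dotp (b.2.2 j) (d.bY j)) - ∑ j, b.2.1 j * d.gq j)
      ring
  map_smul' c a := by
    refine Prod.ext ?_ ?_
    · show d.As.transpose.mulVec (c • a.1) - (∑ j, (d.Ay j).transpose.mulVec (c • a.2.2 j))
        - ∑ j, (c * a.2.1 j) • d.cq j = c • (d.As.transpose.mulVec a.1
          - (∑ j, (d.Ay j).transpose.mulVec (a.2.2 j)) - ∑ j, a.2.1 j • d.cq j)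
      simp only [Matrix.mulVec_smul, mul_smul, ← Finset.smul_sum, smul_sub]
    · show dotp (c • a.1) d.gs - (∑ j, dotp (c • a.2.2 j) (d.bY j))
        - ∑ j, (c * a.2.1 j) * d.gq j = c * (dotp a.1 d.gs
          - (∑ j, dotp (a.2.2 j) (d.bY j)) - ∑ j, a.2.1 j * d.gq j)
      simp only [dotp_smul_left, mul_assoc, ← Finset.mul_sum]
      ring

end H


section Hchoice
variable {n : ℕ}

lemma ind_choice (v : ℝ) : (if 0 < v then (1:ℝ) else 0) * v = max v 0 := by
  split
  · rename_i h; rw [one_mul, max_eq_left (le_of_lt h)]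
  · rename_i h; push_neg at h; rw [zero_mul, max_eq_right h]

lemma socp_choice (yv : Fin 3 → ℝ) (t : ℝ) :
    -(dotp (if 0 < eucNorm yv - t then (-(eucNorm yv)⁻¹) • yv else 0) yv)
      - (if 0 < eucNorm yv - t then (1:ℝ) else 0) * t = max (eucNorm yv - t) 0 := by
  split
  · rename_i h
    rw [dotp_smul_left, dotp_self, max_eq_left (le_of_lt h)]
    by_cases hy : yv = 0
    · rw [hy, eucNorm_zero]; ring
    · have hne : eucNorm yv ≠ 0 := fun h0 => hy (eucNorm_eq_zero.mp h0)
      field_simp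
  · rename_i h
    push_neg at h
    rw [dotp_zero_left, max_eq_right h]
    ring

lemma socp_choice_norm (yv : Fin 3 → ℝ) (t : ℝ) :
    eucNorm (if 0 < eucNorm yv - t then (-(eucNorm yv)⁻¹) • yv else 0)
      ≤ (if 0 < eucNorm yv - t then (1:ℝ) else 0) := by
  split
  · rw [eucNorm_smul, abs_neg, abs_of_nonneg (inv_nonneg.mpr (eucNorm_nonneg _))]
    by_cases hy : yv = 0
    · rw [hy, eucNorm_zero, mul_zero]; norm_num
    · rw [inv_mul_cancel₀ (fun h0 => hy (eucNorm_eq_zero.mp h0))]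
  · rw [eucNorm_zero]

end Hchoice


section H2
variable {n m s N W : ℕ}

set_option maxHeartbeats 2000000 in
lemma exists_dual_opt (d : SOCPData n m s N W) (w : Fin W → ℝ) (p : ℝ) (muf : Fin m → ℝ)
    (hL : ∀ x, p ≤ Fobj d x + dotp muf (d.Af.mulVec x + (d.Bf.mulVec w + d.gf))) :
    ∃ muy ls lq, DualFeas d muf muy ls lq ∧ p ≤ Dobj d w muf muy ls lq := by
  classical
  set g : Fin m → ℝ := d.Bf.mulVec w + d.gf with hgdef
  set k₀ : (Fin n → ℝ) × ℝ := (d.Af.transpose.mulVec muf, dotp muf g) with hk₀def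
  set Φ : ((Fin s → ℝ) × (Fin N → ℝ) × (Fin N → Fin 3 → ℝ)) → (Fin n → ℝ) × ℝ :=
    fun e => k₀ + lamMap d e with hΦdef
  set Cset : Set ((Fin s → ℝ) × (Fin N → ℝ) × (Fin N → Fin 3 → ℝ)) :=
    {e | (∀ i, 0 ≤ e.1 i ∧ e.1 i ≤ 1) ∧ (∀ j, 0 ≤ e.2.1 j ∧ e.2.1 j ≤ 1) ∧
      ∀ j, eucNorm (e.2.2 j) ≤ e.2.1 j} with hCdef
  -- the value identity
  have hval : ∀ (e : (Fin s → ℝ) × (Fin N → ℝ) × (Fin N → Fin 3 → ℝ)) (x : Fin n → ℝ),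
      dotp (Φ e).1 x + (Φ e).2
        = dotp muf (d.Af.mulVec x + g) + dotp e.1 (d.As.mulVec x + d.gs)
          + ∑ j, (-(dotp (e.2.2 j) ((d.Ay j).mulVec x + d.bY j))
            - e.2.1 j * (dotp (d.cq j) x + d.gq j)) := by
    intro e x
    show dotp (k₀.1 + (lamMap d e).1) x + (k₀.2 + (lamMap d e).2) = _
    simp only [hk₀def, lamMap, LinearMap.coe_mk, AddHom.coe_mk]
    simp only [dotp_add_left, dotp_sub_left, dotp_sum_left, dotp_transpose, dotp_smul_left,
      dotp_add_right, Finset.sum_add_distrib, Finset.sum_sub_distrib, Finset.sum_neg_distrib,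
      mul_add]
    ring
  -- pointwise dual choice realizing the reduced objective
  have hpoint : ∀ x : Fin n → ℝ, ∃ e ∈ Cset, p ≤ dotp (Φ e).1 x + (Φ e).2 := by
    intro x
    set ls : Fin s → ℝ := fun i => if 0 < d.As.mulVec x i + d.gs i then 1 else 0 with hlsdef
    set lq : Fin N → ℝ := fun j =>
      if 0 < eucNorm ((d.Ay j).mulVec x + d.bY j) - (dotp (d.cq j) x + d.gq j) then 1 else 0
      with hlqdef
    set muy : Fin N → Fin 3 → ℝ := fun j =>
      if 0 < eucNorm ((d.Ay j).mulVec x + d.bY j) - (dotp (d.cq j) x + d.gq j) then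
        (-(eucNorm ((d.Ay j).mulVec x + d.bY j))⁻¹) • ((d.Ay j).mulVec x + d.bY j) else 0
      with hmuydef
    have hmem : (ls, lq, muy) ∈ Cset := by
      refine ⟨fun i => ⟨?_, ?_⟩, fun j => ⟨?_, ?_⟩, fun j => ?_⟩
      · show (0:ℝ) ≤ if 0 < d.As.mulVec x i + d.gs i then 1 else 0
        split <;> norm_num
      · show (if 0 < d.As.mulVec x i + d.gs i then (1:ℝ) else 0) ≤ 1
        split <;> norm_num
      · show (0:ℝ) ≤ if 0 < eucNorm ((d.Ay j).mulVec x + d.bY j)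
            - (dotp (d.cq j) x + d.gq j) then 1 else 0
        split <;> norm_num
      · show (if 0 < eucNorm ((d.Ay j).mulVec x + d.bY j)
            - (dotp (d.cq j) x + d.gq j) then (1:ℝ) else 0) ≤ 1
        split <;> norm_num
      · exact socp_choice_norm _ _
    refine ⟨(ls, lq, muy), hmem, ?_⟩
    rw [hval]
    have h1 : dotp ls (d.As.mulVec x + d.gs) = ∑ i, max (d.As.mulVec x i + d.gs i) 0 := by
      rw [dotp]
      refine Finset.sum_congr rfl (fun i _ => ?_)
      exact ind_choice _
    have h2s : ∑ j, (-(dotp (muy j) ((d.Ay j).mulVec x + d.bY j))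
        - lq j * (dotp (d.cq j) x + d.gq j))
        = ∑ j, max (eucNorm ((d.Ay j).mulVec x + d.bY j) - (dotp (d.cq j) x + d.gq j)) 0 := by
      refine Finset.sum_congr rfl (fun j _ => ?_)
      exact socp_choice _ _
    rw [h1, h2s]
    have := hL x
    rw [Fobj] at this
    linarith
  by_contra hcon
  push_neg at hcon
  -- convexity and compactness of the image K
  have hCconv : Convex ℝ Cset := by
    rintro e1 he1 e2 he2 θ σ hθ hσ hθσ
    refine ⟨fun i => ?_, fun j => ?_, fun j => ?_⟩
    · have h1 := he1.1 i; have h2 := he2.1 i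
      show 0 ≤ θ * e1.1 i + σ * e2.1 i ∧ θ * e1.1 i + σ * e2.1 i ≤ 1
      constructor
      · exact add_nonneg (mul_nonneg hθ h1.1) (mul_nonneg hσ h2.1)
      · have := mul_le_of_le_one_right hθ h1.2
        have := mul_le_of_le_one_right hσ h2.2
        linarith
    · have h1 := he1.2.1 j; have h2 := he2.2.1 j
      show 0 ≤ θ * e1.2.1 j + σ * e2.2.1 j ∧ θ * e1.2.1 j + σ * e2.2.1 j ≤ 1
      constructor
      · exact add_nonneg (mul_nonneg hθ h1.1) (mul_nonneg hσ h2.1)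
      · have := mul_le_of_le_one_right hθ h1.2
        have := mul_le_of_le_one_right hσ h2.2
        linarith
    · have h1 := he1.2.2 j; have h2 := he2.2.2 j
      show eucNorm (θ • e1.2.2 j + σ • e2.2.2 j) ≤ θ * e1.2.1 j + σ * e2.2.1 j
      calc eucNorm (θ • e1.2.2 j + σ • e2.2.2 j)
          ≤ eucNorm (θ • e1.2.2 j) + eucNorm (σ • e2.2.2 j) := eucNorm_add_le _ _
        _ = θ * eucNorm (e1.2.2 j) + σ * eucNorm (e2.2.2 j) := by
            rw [eucNorm_smul, eucNorm_smul, abs_of_nonneg hθ, abs_of_nonneg hσ]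
        _ ≤ θ * e1.2.1 j + σ * e2.2.1 j :=
            add_le_add (mul_le_mul_of_nonneg_left h1 hθ) (mul_le_mul_of_nonneg_left h2 hσ)
  have hCclosed : IsClosed Cset := by
    have : Cset = (⋂ i, ({e : (Fin s → ℝ) × (Fin N → ℝ) × (Fin N → Fin 3 → ℝ) | 0 ≤ e.1 i}
        ∩ {e | e.1 i ≤ 1}))
        ∩ ((⋂ j, ({e : (Fin s → ℝ) × (Fin N → ℝ) × (Fin N → Fin 3 → ℝ) | 0 ≤ e.2.1 j}
          ∩ {e | e.2.1 j ≤ 1}))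
        ∩ (⋂ j, {e : (Fin s → ℝ) × (Fin N → ℝ) × (Fin N → Fin 3 → ℝ) |
            eucNorm (e.2.2 j) ≤ e.2.1 j})) := by
      ext e
      simp only [hCdef, Set.mem_setOf_eq, Set.mem_inter_iff, Set.mem_iInter]
    rw [this]
    have hc1 : Continuous fun e : (Fin s → ℝ) × (Fin N → ℝ) × (Fin N → Fin 3 → ℝ) => e.1 :=
      continuous_fst
    have hc2 : Continuous fun e : (Fin s → ℝ) × (Fin N → ℝ) × (Fin N → Fin 3 → ℝ) => e.2.1 :=
      continuous_fst.comp continuous_snd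
    have hc3 : Continuous fun e : (Fin s → ℝ) × (Fin N → ℝ) × (Fin N → Fin 3 → ℝ) => e.2.2 :=
      continuous_snd.comp continuous_snd
    refine IsClosed.inter (isClosed_iInter (fun i => IsClosed.inter ?_ ?_))
      (IsClosed.inter (isClosed_iInter (fun j => IsClosed.inter ?_ ?_))
        (isClosed_iInter (fun j => ?_)))
    · exact isClosed_le continuous_const ((continuous_apply i).comp hc1)
    · exact isClosed_le ((continuous_apply i).comp hc1) continuous_const
    · exact isClosed_le continuous_const ((continuous_apply j).comp hc2)
    · exact isClosed_le ((continuous_apply j).comp hc2) continuous_const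
    · exact isClosed_le (continuous_eucNorm.comp ((continuous_apply j).comp hc3))
        ((continuous_apply j).comp hc2)
  have hCsub : Cset ⊆ Metric.closedBall 0 1 := by
    intro e he
    rw [Metric.mem_closedBall, dist_zero_right]
    rw [Prod.norm_def]
    refine max_le ?_ ?_
    · rw [pi_norm_le_iff_of_nonneg (by norm_num : (0:ℝ) ≤ 1)]
      intro i
      rw [Real.norm_eq_abs]
      exact abs_le.mpr ⟨by linarith [(he.1 i).1], (he.1 i).2⟩
    · rw [Prod.norm_def]
      refine max_le ?_ ?_
      · rw [pi_norm_le_iff_of_nonneg (by norm_num : (0:ℝ) ≤ 1)]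
        intro j
        rw [Real.norm_eq_abs]
        exact abs_le.mpr ⟨by linarith [(he.2.1 j).1], (he.2.1 j).2⟩
      · rw [pi_norm_le_iff_of_nonneg (by norm_num : (0:ℝ) ≤ 1)]
        intro j
        rw [pi_norm_le_iff_of_nonneg (by norm_num : (0:ℝ) ≤ 1)]
        intro i3
        rw [Real.norm_eq_abs]
        have := abs_apply_le_eucNorm (e.2.2 j) i3
        have := he.2.2 j
        have := (he.2.1 j).2
        linarith
  have hCcomp : IsCompact Cset :=
    (isCompact_closedBall (0 : (Fin s → ℝ) × (Fin N → ℝ) × (Fin N → Fin 3 → ℝ)) 1).of_isClosed_subset hCclosed hCsub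
  set K : Set ((Fin n → ℝ) × ℝ) := Φ '' Cset with hKdef
  have hKeq : K = (fun v => k₀ + v) '' ((lamMap d) '' Cset) := by
    rw [hKdef, Set.image_image]
  have hKconv : Convex ℝ K := by
    rw [hKeq]
    exact (hCconv.linear_image (lamMap d)).translate k₀
  have hKcomp : IsCompact K := by
    rw [hKeq]
    exact ((hCcomp.image (lamMap d).continuous_of_finiteDimensional).image
      (continuous_const.add continuous_id))
  set Q : Set ((Fin n → ℝ) × ℝ) := {q | q.1 = 0 ∧ p ≤ q.2} with hQdef
  have hQconv : Convex ℝ Q := by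
    rintro q1 ⟨hq11, hq12⟩ q2 ⟨hq21, hq22⟩ θ σ hθ hσ hθσ
    constructor
    · show θ • q1.1 + σ • q2.1 = 0
      rw [hq11, hq21, smul_zero, smul_zero, add_zero]
    · show p ≤ θ * q1.2 + σ * q2.2
      have h1 := mul_le_mul_of_nonneg_left hq12 hθ
      have h2 := mul_le_mul_of_nonneg_left hq22 hσ
      have h3 : θ * p + σ * p = p := by rw [← add_mul, hθσ, one_mul]
      linarith
  have hQclosed : IsClosed Q :=
    (isClosed_eq continuous_fst continuous_const).inter
      (isClosed_le continuous_const continuous_snd)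
  have hdisj : Disjoint K Q := by
    rw [Set.disjoint_left]
    rintro q ⟨e, heC, rfl⟩ ⟨hq1, hq2⟩
    have h0 : d.Af.transpose.mulVec muf + (d.As.transpose.mulVec e.1
        - (∑ j, (d.Ay j).transpose.mulVec (e.2.2 j)) - ∑ j, e.2.1 j • d.cq j) = 0 := hq1
    have hstat : d.Af.transpose.mulVec muf + d.As.transpose.mulVec e.1
        = (∑ j, (d.Ay j).transpose.mulVec (e.2.2 j)) + ∑ j, e.2.1 j • d.cq j := by
      funext i
      have h0i := congrFun h0 i
      simp only [Pi.add_apply, Pi.sub_apply, Pi.zero_apply] at h0i ⊢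
      linarith
    have hDF : DualFeas d muf e.2.2 e.1 e.2.1 := ⟨heC.1, heC.2.1, hstat, heC.2.2⟩
    have hDeq : Dobj d w muf e.2.2 e.1 e.2.1 = (Φ e).2 := by
      show _ = k₀.2 + (lamMap d e).2
      simp only [hk₀def, lamMap, LinearMap.coe_mk, AddHom.coe_mk, Dobj]
      ring
    have := hcon e.2.2 e.1 e.2.1 hDF
    rw [hDeq] at this
    exact absurd hq2 (not_le.mpr this)
  obtain ⟨f, u, v, hfK, huv, hfQ⟩ :=
    geometric_hahn_banach_compact_closed hKconv hKcomp hQconv hQclosed hdisj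
  set J : (Fin n → ℝ) →ₗ[ℝ] ℝ :=
    (f : ((Fin n → ℝ) × ℝ) →ₗ[ℝ] ℝ).comp (LinearMap.inl ℝ (Fin n → ℝ) ℝ) with hJdef
  have hJapp : ∀ a : Fin n → ℝ, J a = f (a, 0) := fun a => rfl
  set wv : Fin n → ℝ := fun i => J (fun j2 => if i = j2 then (1:ℝ) else 0) with hwvdef
  have hJ : ∀ a, J a = dotp wv a := by
    intro a
    rw [LinearMap.pi_apply_eq_sum_univ J a, dotp]
    exact Finset.sum_congr rfl (fun i _ => by rw [smul_eq_mul, mul_comm])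
  set t₂ : ℝ := f (0, 1) with ht₂def
  have hfs : ∀ (a : Fin n → ℝ) (β : ℝ), f (a, β) = dotp wv a + β * t₂ := by
    intro a β
    have h1 : (a, β) = (a, (0:ℝ)) + β • ((0 : Fin n → ℝ), (1:ℝ)) := by
      simp [Prod.ext_iff]
    rw [h1, map_add, _root_.map_smul, ← hJapp, hJ]
    simp [ht₂def, smul_eq_mul]
  have hQf : ∀ r, p ≤ r → v < r * t₂ := by
    intro r hr
    have := hfQ (0, r) ⟨rfl, hr⟩
    rwa [hfs, dotp_zero_right, zero_add] at this
  have ht₂ : 0 ≤ t₂ := by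
    by_contra hcon2
    push_neg at hcon2
    have h1 := hQf (max p ((v-1)/t₂)) (le_max_left _ _)
    have h2 : (v-1)/t₂ ≤ max p ((v-1)/t₂) := le_max_right _ _
    rw [div_le_iff_of_neg hcon2] at h2
    linarith
  have hvp : v < p * t₂ := hQf p le_rfl
  -- a uniform bound for the affine part over Cset
  set B : ℝ := |dotp muf g| + (∑ i, |d.gs i|) + (∑ j, ∑ i3, |d.bY j i3|) + ∑ j, |d.gq j|
    with hBdef
  have hB : ∀ e ∈ Cset, (Φ e).2 ≤ B := by
    intro e he
    have hshow : (Φ e).2 = dotp muf g + (dotp e.1 d.gs - (∑ j, dotp (e.2.2 j) (d.bY j))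
        - ∑ j, e.2.1 j * d.gq j) := rfl
    have b1 : dotp e.1 d.gs ≤ ∑ i, |d.gs i| := by
      refine le_trans (le_abs_self _) (abs_dotp_le_of_bounded (fun i => ?_))
      exact abs_le.mpr ⟨by linarith [(he.1 i).1], (he.1 i).2⟩
    have b2 : ∀ j, -(dotp (e.2.2 j) (d.bY j)) ≤ ∑ i3, |d.bY j i3| := by
      intro j
      have hb : ∀ i3, |e.2.2 j i3| ≤ 1 := by
        intro i3
        have := abs_apply_le_eucNorm (e.2.2 j) i3
        have := he.2.2 j
        have := (he.2.1 j).2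
        linarith
      have := abs_dotp_le_of_bounded hb (b := d.bY j)
      have h' := neg_abs_le (dotp (e.2.2 j) (d.bY j))
      linarith
    have b3 : ∀ j, -(e.2.1 j * d.gq j) ≤ |d.gq j| := by
      intro j
      have : |e.2.1 j * d.gq j| ≤ |d.gq j| := by
        rw [abs_mul]
        refine mul_le_of_le_one_left (abs_nonneg _) ?_
        exact abs_le.mpr ⟨by linarith [(he.2.1 j).1], (he.2.1 j).2⟩
      have h' := neg_abs_le (e.2.1 j * d.gq j)
      linarith
    have b2s : -(∑ j, dotp (e.2.2 j) (d.bY j)) ≤ ∑ j, ∑ i3, |d.bY j i3| := by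
      rw [← Finset.sum_neg_distrib]
      exact Finset.sum_le_sum (fun j _ => b2 j)
    have b3s : -(∑ j, e.2.1 j * d.gq j) ≤ ∑ j, |d.gq j| := by
      rw [← Finset.sum_neg_distrib]
      exact Finset.sum_le_sum (fun j _ => b3 j)
    rw [hshow, hBdef]
    have := le_abs_self (dotp muf g)
    linarith
  rcases eq_or_lt_of_le ht₂ with h0 | h0
  · -- t₂ = 0 : contradiction by scaling
    have hu0 : u < 0 := by
      rw [← h0, mul_zero] at hvp
      linarith
    set σv : ℝ := (|p - B| + 1) / (-u) with hσdef
    have hσ : 0 < σv := div_pos (by positivity) (by linarith)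
    obtain ⟨e, heC, hpe⟩ := hpoint (σv • wv)
    have hfa := hfK (Φ e) ⟨e, heC, rfl⟩
    have hfe : f (Φ e) = dotp wv (Φ e).1 := by
      have : Φ e = ((Φ e).1, (Φ e).2) := rfl
      rw [this, hfs, ← h0, mul_zero, add_zero]
    have hdp : dotp (Φ e).1 (σv • wv) = σv * dotp wv (Φ e).1 := by
      rw [dotp_smul_right, dotp_comm]
    have h3 : σv * (-u) = |p - B| + 1 := div_mul_cancel₀ _ (by linarith : -u ≠ 0)
    rw [mul_neg] at h3
    have h4 : σv * dotp wv (Φ e).1 < σv * u :=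
      mul_lt_mul_of_pos_left (by rw [← hfe]; exact hfa) hσ
    have h5 := hB e heC
    have h6 : |p - B| ≥ B - p := by
      rw [abs_sub_comm]
      exact le_abs_self _
    rw [hdp] at hpe
    linarith
  · -- t₂ > 0 : contradiction at the normalized point
    obtain ⟨e, heC, hpe⟩ := hpoint (t₂⁻¹ • wv)
    have hfa := hfK (Φ e) ⟨e, heC, rfl⟩
    have hfe : f (Φ e) = dotp wv (Φ e).1 + (Φ e).2 * t₂ := by
      have : Φ e = ((Φ e).1, (Φ e).2) := rfl
      rw [this, hfs]
    have hdp : dotp (Φ e).1 (t₂⁻¹ • wv) = t₂⁻¹ * dotp wv (Φ e).1 := by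
      rw [dotp_smul_right, dotp_comm]
    rw [hdp] at hpe
    have h1 := mul_le_mul_of_nonneg_left hpe (le_of_lt h0)
    have h2 : t₂ * (t₂⁻¹ * dotp wv (Φ e).1 + (Φ e).2)
        = dotp wv (Φ e).1 + t₂ * (Φ e).2 := by
      rw [mul_add, ← mul_assoc, mul_inv_cancel₀ (ne_of_gt h0), one_mul]
    rw [h2] at h1
    nlinarith [hfa, huv, hvp, hfe]

end H2


/-- Proposition 1 (strong duality): if Slater's condition holds for `FP'(w)`
(the affine power-flow equations are solvable), then `fp'(w) = dp'(w)`. -/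
theorem stmt_4 {n m s N W : ℕ} (hn : 0 < n) (hm : 0 < m) (hs : 0 < s) (hN : 0 < N)
    (hW : 0 < W) (d : SOCPData n m s N W) (w : Fin W → ℝ)
    (hx : ∃ x : Fin n → ℝ, d.Af.mulVec x + d.Bf.mulVec w + d.gf = 0) :
    fpVal d w = dpVal d w := by
  obtain ⟨x₀, hx₀⟩ := hx
  set g : Fin m → ℝ := d.Bf.mulVec w + d.gf with hgdef
  have hconv : ∀ x : Fin n → ℝ, d.Af.mulVec x + g = 0
      ↔ d.Af.mulVec x + d.Bf.mulVec w + d.gf = 0 := by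
    intro x
    rw [hgdef, ← add_assoc]
  have hx₀' : d.Af.mulVec x₀ + g = 0 := (hconv x₀).mpr hx₀
  have hmemP : ∀ x, d.Af.mulVec x + g = 0 →
      ((Fobj d x : ℝ) : EReal) ∈ {v : EReal | ∃ x y zs zq, FPfeas d w x y zs zq ∧
        v = (((∑ i, zs i) + ∑ j, zq j : ℝ) : EReal)} := by
    intro x hxg
    obtain ⟨y, zs, zq, hfeas, hsum⟩ := exists_feas_of_affine d w x ((hconv x).mp hxg)
    exact ⟨x, y, zs, zq, hfeas, by rw [hsum]⟩
  have h0le : ∀ v ∈ {v : EReal | ∃ x y zs zq, FPfeas d w x y zs zq ∧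
      v = (((∑ i, zs i) + ∑ j, zq j : ℝ) : EReal)}, (0 : EReal) ≤ v := by
    rintro v ⟨x, y, zs, zq, hf, rfl⟩
    have h1 : (0:ℝ) ≤ (∑ i, zs i) + ∑ j, zq j :=
      add_nonneg (Finset.sum_nonneg (fun i _ => hf.1 i))
        (Finset.sum_nonneg (fun j _ => hf.2.1 j))
    exact_mod_cast h1
  have hge0 : (0 : EReal) ≤ fpVal d w := le_sInf h0le
  have hleF : fpVal d w ≤ ((Fobj d x₀ : ℝ) : EReal) := sInf_le (hmemP x₀ hx₀')
  have htop : fpVal d w ≠ ⊤ := (hleF.trans_lt (EReal.coe_lt_top _)).ne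
  have hbot : fpVal d w ≠ ⊥ := by
    have : (⊥ : EReal) < fpVal d w :=
      lt_of_lt_of_le (by exact_mod_cast EReal.bot_lt_coe 0) hge0
    exact this.ne'
  set p : ℝ := (fpVal d w).toReal with hpdef
  have hfp : fpVal d w = (p : EReal) := (EReal.coe_toReal htop hbot).symm
  have hp_le : ∀ x, d.Af.mulVec x + g = 0 → p ≤ Fobj d x := by
    intro x hxg
    have h1 := sInf_le (hmemP x hxg)
    rw [show sInf {v : EReal | ∃ x y zs zq, FPfeas d w x y zs zq ∧
        v = (((∑ i, zs i) + ∑ j, zq j : ℝ) : EReal)} = fpVal d w from rfl, hfp] at h1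
    exact_mod_cast h1
  obtain ⟨muf, hmuf⟩ := exists_lagrange d g p x₀ hx₀' hp_le
  obtain ⟨muy, ls, lq, hDF, hDp⟩ := exists_dual_opt d w p muf (fun x => hmuf x)
  have hub : dpVal d w ≤ (p : EReal) := by
    refine sSup_le ?_
    rintro v ⟨muf', muy', ls', lq', hDF', rfl⟩
    have h1 : ((Dobj d w muf' muy' ls' lq' : ℝ) : EReal) ≤ fpVal d w := by
      refine le_sInf ?_
      rintro b ⟨x, y, zs, zq, hfeas, rfl⟩
      exact_mod_cast weak_duality d w hfeas hDF'
    rwa [hfp] at h1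
  have hlb : (p : EReal) ≤ dpVal d w := by
    have h1 : ((Dobj d w muf muy ls lq : ℝ) : EReal) ∈ {v : EReal | ∃ muf muy ls lq,
        DualFeas d muf muy ls lq ∧ v = ((Dobj d w muf muy ls lq : ℝ) : EReal)} :=
      ⟨muf, muy, ls, lq, hDF, rfl⟩
    refine le_trans ?_ (le_sSup h1)
    exact_mod_cast hDp
  rw [hfp]
  exact (le_antisymm hub hlb).symm
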